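/- For the symmetric noncompliance matrix Π(p) = [[1−p, p],[p, 1−p]] with p ∈ [0, 1/2) and any μ ∈ (0,1)² with μ₁ > μ₂, the coefficient f(μ'₁, μ'₂) of the Thompson sampling regret bound applied to μ' = Π(p)·μ is nondecreasing in p on [0, 1/2): if 0 ≤ p ≤ q < 1/2 then f((Π(p)μ)₁, (Π(p)μ)₂) ≤ f((Π(q)μ)₁, (Π(q)μ)₂). -/

import Mathlib

noncomputable def binKL (a b : ℝ) : ℝ :=
  a * Real.log (a / b) + (1 - a) * Real.log ((1 - a) / (1 - b))

noncomputable def f (a b : ℝ) : ℝ := (a - b) / binKL b a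

open Real Set

open Real Set

lemma hasDerivAt_binKL_right {b : ℝ} (hb0 : 0 < b) (hb1 : b < 1) {x : ℝ}
    (hx0 : 0 < x) (hx1 : x < 1) :
    HasDerivAt (fun y => binKL b y) ((x - b) / (x * (1 - x))) x := by
  have h1m : HasDerivAt (fun y : ℝ => 1 - y) (-1) x := by
    simpa using (hasDerivAt_id x).const_sub 1
  have hlog : HasDerivAt Real.log x⁻¹ x := Real.hasDerivAt_log hx0.ne'
  have hlog1m : HasDerivAt (fun y => Real.log (1 - y)) (-1 / (1 - x)) x :=
    h1m.log (by linarith)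
  have hmain : HasDerivAt
      (fun y => b * Real.log b - b * Real.log y
        + ((1 - b) * Real.log (1 - b) - (1 - b) * Real.log (1 - y)))
      ((x - b) / (x * (1 - x))) x := by
    have := ((hasDerivAt_const x (b * Real.log b)).sub (hlog.const_mul b)).add
      ((hasDerivAt_const x ((1 - b) * Real.log (1 - b))).sub (hlog1m.const_mul (1 - b)))
    have hxne : x ≠ 0 := hx0.ne'
    have h1xne : (1:ℝ) - x ≠ 0 := by linarith
    refine this.congr_deriv ?_
    field_simp
    ring
  refine hmain.congr_of_eventuallyEq ?_
  filter_upwards [Ioo_mem_nhds hx0 hx1] with y hy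
  rw [binKL, Real.log_div hb0.ne' hy.1.ne', Real.log_div (by linarith) (by linarith [hy.2] : (1:ℝ) - y ≠ 0)]
  ring

lemma hasDerivAt_binKL_left {a : ℝ} (ha0 : 0 < a) (ha1 : a < 1) {x : ℝ}
    (hx0 : 0 < x) (hx1 : x < 1) :
    HasDerivAt (fun y => binKL y a)
      (Real.log (x / a) - Real.log ((1 - x) / (1 - a))) x := by
  have h1m : HasDerivAt (fun y : ℝ => 1 - y) (-1) x := by
    simpa using (hasDerivAt_id x).const_sub 1
  have h1 : HasDerivAt (fun y : ℝ => y * Real.log y) (Real.log x + 1) x :=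
    Real.hasDerivAt_mul_log hx0.ne'
  have h3 : HasDerivAt (fun y : ℝ => (1 - y) * Real.log (1 - y))
      ((Real.log (1 - x) + 1) * (-1)) x :=
    (Real.hasDerivAt_mul_log (by linarith : (1:ℝ) - x ≠ 0)).comp x h1m
  have hmain : HasDerivAt
      (fun y => y * Real.log y - y * Real.log a
        + ((1 - y) * Real.log (1 - y) - (1 - y) * Real.log (1 - a)))
      (Real.log (x / a) - Real.log ((1 - x) / (1 - a))) x := by
    have := (h1.sub ((hasDerivAt_id x).mul_const (Real.log a))).add
      (h3.sub (h1m.mul_const (Real.log (1 - a))))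
    refine this.congr_deriv ?_
    rw [Real.log_div hx0.ne' ha0.ne', Real.log_div (by linarith : (1:ℝ) - x ≠ 0) (by linarith : (1:ℝ) - a ≠ 0)]
    ring
  refine hmain.congr_of_eventuallyEq ?_
  filter_upwards [Ioo_mem_nhds hx0 hx1] with y hy
  rw [binKL, Real.log_div hy.1.ne' ha0.ne', Real.log_div (by linarith [hy.2] : (1:ℝ) - y ≠ 0) (by linarith : (1:ℝ) - a ≠ 0)]
  ring

lemma binKL_self {b : ℝ} (hb0 : 0 < b) (hb1 : b < 1) : binKL b b = 0 := by
  rw [binKL, div_self hb0.ne', div_self (by linarith : (1:ℝ) - b ≠ 0)]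
  simp

lemma continuousOn_binKL_right {b : ℝ} (hb0 : 0 < b) (hb1 : b < 1) :
    ContinuousOn (fun y => binKL b y) (Set.Ico b 1) := by
  apply ContinuousOn.add
  · exact continuousOn_const.mul ((continuousOn_const.div continuousOn_id
      (fun y hy => (lt_of_lt_of_le hb0 hy.1).ne')).log
      (fun y hy => (div_pos hb0 (lt_of_lt_of_le hb0 hy.1)).ne'))
  · refine continuousOn_const.mul (ContinuousOn.log ?_ ?_)
    · refine ContinuousOn.div continuousOn_const (by fun_prop) ?_
      intro y hy
      simp only [Set.mem_Ico] at hy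
      show (1:ℝ) - y ≠ 0
      have : y < 1 := hy.2
      linarith
    · intro y hy
      simp only [Set.mem_Ico] at hy
      show (1 - b) / (1 - y) ≠ 0
      have h1 : (0:ℝ) < 1 - y := by linarith [hy.2]
      exact (div_pos (by linarith) h1).ne'

lemma binKL_pos {b a : ℝ} (hb0 : 0 < b) (hba : b < a) (ha1 : a < 1) : 0 < binKL b a := by
  have hb1 : b < 1 := hba.trans ha1
  have hmono : StrictMonoOn (fun y => binKL b y) (Set.Ico b 1) := by
    apply strictMonoOn_of_deriv_pos (convex_Ico b 1) (continuousOn_binKL_right hb0 hb1)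
    intro x hx
    rw [interior_Ico] at hx
    rw [(hasDerivAt_binKL_right hb0 hb1 (hb0.trans hx.1) hx.2).deriv]
    exact div_pos (by linarith [hx.1]) (mul_pos (hb0.trans hx.1) (by linarith [hx.2]))
  have := hmono (Set.mem_Ico.2 ⟨le_refl b, hb1⟩) (Set.mem_Ico.2 ⟨hba.le, ha1⟩) hba
  simpa [binKL_self hb0 hb1] using this

lemma binKL_le_sq {b a : ℝ} (hb0 : 0 < b) (hba : b < a) (ha1 : a < 1) :
    binKL b a ≤ (a - b) ^ 2 / (a * (1 - a)) := by
  have hb1 : b < 1 := hba.trans ha1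
  set F : ℝ → ℝ := fun x => (x - b) ^ 2 / (x * (1 - x)) - binKL b x with hF
  have hmono : MonotoneOn F (Set.Ico b 1) := by
    apply monotoneOn_of_hasDerivWithinAt_nonneg (convex_Ico b 1)
      (f' := fun x => (x - b) * ((x - b) ^ 2 + b * (1 - b)) / (x * (1 - x)) ^ 2)
    · apply ContinuousOn.sub _ (continuousOn_binKL_right hb0 hb1)
      apply ContinuousOn.div
      · fun_prop
      · fun_prop
      · intro y hy
        have h0 : 0 < y := lt_of_lt_of_le hb0 hy.1
        have h1 : y < 1 := hy.2
        exact (mul_pos h0 (by linarith)).ne'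
    · intro x hx
      rw [interior_Ico] at hx
      have hx0 : 0 < x := hb0.trans hx.1
      have hx1 : x < 1 := hx.2
      have hnum : HasDerivAt (fun y : ℝ => (y - b) ^ 2) (2 * (x - b)) x := by
        exact (((hasDerivAt_id x).sub_const b).pow 2).congr_deriv (by simp)
      have hden : HasDerivAt (fun y : ℝ => y * (1 - y)) (1 - 2 * x) x := by
        have := (hasDerivAt_id x).mul ((hasDerivAt_id x).const_sub 1)
        refine this.congr_deriv ?_
        simp only [id_eq]
        ring
      have hquot := hnum.div hden (by nlinarith : x * (1 - x) ≠ 0)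
      have hd := hquot.sub (hasDerivAt_binKL_right hb0 hb1 hx0 hx1)
      have heq : (2 * (x - b) * (x * (1 - x)) - (x - b) ^ 2 * (1 - 2 * x)) / (x * (1 - x)) ^ 2
          - (x - b) / (x * (1 - x))
          = (x - b) * ((x - b) ^ 2 + b * (1 - b)) / (x * (1 - x)) ^ 2 := by
        have hxne : x ≠ 0 := hx0.ne'
        have h1xne : (1:ℝ) - x ≠ 0 := by linarith
        field_simp
        ring
      rw [← heq]
      exact hd.hasDerivWithinAt
    · intro x hx
      rw [interior_Ico] at hx
      have hx0 : 0 < x := hb0.trans hx.1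
      apply div_nonneg _ (sq_nonneg _)
      have : 0 < (x - b) ^ 2 + b * (1 - b) := by nlinarith [hx.1]
      nlinarith [hx.1]
  have h := hmono (Set.mem_Ico.2 ⟨le_refl b, hb1⟩) (Set.mem_Ico.2 ⟨hba.le, ha1⟩) hba.le
  have hFb : F b = 0 := by
    simp [hF, binKL_self hb0 hb1]
  rw [hFb] at h
  simp only [hF] at h
  linarith

lemma continuousOn_binKL_left {a : ℝ} (ha0 : 0 < a) (ha1 : a < 1) :
    ContinuousOn (fun y => binKL y a) (Set.Ioc 0 a) := by
  have h1 : ∀ y ∈ Set.Ioc (0:ℝ) a, (0:ℝ) < y := fun y hy => hy.1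
  have h2 : ∀ y ∈ Set.Ioc (0:ℝ) a, (0:ℝ) < 1 - y := fun y hy => by
    have := hy.2; linarith
  apply ContinuousOn.add
  · refine (continuousOn_id.mul (ContinuousOn.log ?_ ?_))
    · exact continuousOn_id.div continuousOn_const (fun y _ => ha0.ne')
    · intro y hy
      show y / a ≠ 0
      exact (div_pos (h1 y hy) ha0).ne'
  · refine ((continuousOn_const.sub continuousOn_id).mul (ContinuousOn.log ?_ ?_))
    · exact (continuousOn_const.sub continuousOn_id).div continuousOn_const
        (fun y _ => (by linarith : (1:ℝ) - a ≠ 0))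
    · intro y hy
      show (1 - y) / (1 - a) ≠ 0
      exact (div_pos (h2 y hy) (by linarith)).ne'

lemma G_nonpos {a x : ℝ} (ha1 : a < 1) (hx0 : 0 < x) (hxa : x < a) :
    binKL x a + (a - x) * (Real.log (x / a) - Real.log ((1 - x) / (1 - a))) ≤ 0 := by
  have ha0 : 0 < a := hx0.trans hxa
  set G : ℝ → ℝ := fun y =>
    binKL y a + (a - y) * (Real.log (y / a) - Real.log ((1 - y) / (1 - a))) with hG
  have hmono : MonotoneOn G (Set.Ioc 0 a) := by
    apply monotoneOn_of_hasDerivWithinAt_nonneg (convex_Ioc 0 a)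
      (f' := fun y => (a - y) * (y⁻¹ + 1 / (1 - y)))
    · apply ContinuousOn.add (continuousOn_binKL_left ha0 ha1)
      refine (continuousOn_const.sub continuousOn_id).mul (ContinuousOn.sub ?_ ?_)
      · refine ContinuousOn.log (continuousOn_id.div continuousOn_const (fun y _ => ha0.ne')) ?_
        intro y hy
        show y / a ≠ 0
        exact (div_pos hy.1 ha0).ne'
      · refine ContinuousOn.log ((continuousOn_const.sub continuousOn_id).div continuousOn_const
          (fun y _ => (by linarith : (1:ℝ) - a ≠ 0))) ?_
        intro y hy
        show (1 - y) / (1 - a) ≠ 0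
        have := hy.2
        exact (div_pos (by linarith) (by linarith)).ne'
    · intro y hy
      rw [interior_Ioc] at hy
      have hy0 : 0 < y := hy.1
      have hy1 : y < 1 := hy.2.trans ha1
      have hKL := hasDerivAt_binKL_left ha0 ha1 hy0 hy1
      -- derivative of L y = log (y/a) - log ((1-y)/(1-a))
      have hL : HasDerivAt (fun y => Real.log (y / a) - Real.log ((1 - y) / (1 - a)))
          (y⁻¹ + 1 / (1 - y)) y := by
        have h1m : HasDerivAt (fun z : ℝ => 1 - z) (-1) y := by
          simpa using (hasDerivAt_id y).const_sub 1
        have hlog : HasDerivAt Real.log y⁻¹ y := Real.hasDerivAt_log hy0.ne'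
        have hlog1m : HasDerivAt (fun z => Real.log (1 - z)) (-1 / (1 - y)) y :=
          h1m.log (by linarith)
        have hmain : HasDerivAt
            (fun z => (Real.log z - Real.log a) - (Real.log (1 - z) - Real.log (1 - a)))
            (y⁻¹ + 1 / (1 - y)) y := by
          have := (hlog.sub_const (Real.log a)).sub (hlog1m.sub_const (Real.log (1 - a)))
          refine this.congr_deriv ?_
          ring
        refine hmain.congr_of_eventuallyEq ?_
        filter_upwards [Ioo_mem_nhds hy0 hy1] with z hz
        rw [Real.log_div hz.1.ne' ha0.ne',
          Real.log_div (by linarith [hz.2] : (1:ℝ) - z ≠ 0) (by linarith : (1:ℝ) - a ≠ 0)]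
      have hprod : HasDerivAt (fun z => (a - z) * (Real.log (z / a) - Real.log ((1 - z) / (1 - a))))
          ((-1) * (Real.log (y / a) - Real.log ((1 - y) / (1 - a)))
            + (a - y) * (y⁻¹ + 1 / (1 - y))) y := by
        have h1 : HasDerivAt (fun z : ℝ => a - z) (-1) y := by
          simpa using (hasDerivAt_id y).const_sub a
        exact h1.mul hL
      have hsum := hKL.add hprod
      have : (Real.log (y / a) - Real.log ((1 - y) / (1 - a)))
          + ((-1) * (Real.log (y / a) - Real.log ((1 - y) / (1 - a)))
            + (a - y) * (y⁻¹ + 1 / (1 - y))) = (a - y) * (y⁻¹ + 1 / (1 - y)) := by ring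
      rw [this] at hsum
      exact hsum.hasDerivWithinAt
    · intro y hy
      rw [interior_Ioc] at hy
      have hy1 : y < 1 := hy.2.trans ha1
      have h1 : (0:ℝ) ≤ a - y := by linarith [hy.2]
      have h2 : (0:ℝ) ≤ y⁻¹ + 1 / (1 - y) :=
        add_nonneg (inv_nonneg.2 hy.1.le) (le_of_lt (div_pos one_pos (by linarith)))
      exact mul_nonneg h1 h2
  have h := hmono (Set.mem_Ioc.2 ⟨hx0, hxa.le⟩) (Set.mem_Ioc.2 ⟨ha0, le_refl a⟩) hxa.le
  have hGa : G a = 0 := by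
    simp [hG, binKL_self ha0 ha1]
  rw [hGa] at h
  exact h

lemma ratio_mono_right {b : ℝ} (hb0 : 0 < b) (hb1 : b < 1) :
    MonotoneOn (fun x => binKL b x / (x - b)) (Set.Ioo b 1) := by
  apply monotoneOn_of_hasDerivWithinAt_nonneg (convex_Ioo b 1)
    (f' := fun x => ((x - b) / (x * (1 - x)) * (x - b) - binKL b x * 1) / (x - b) ^ 2)
  · apply ContinuousOn.div
    · exact (continuousOn_binKL_right hb0 hb1).mono Set.Ioo_subset_Ico_self
    · fun_prop
    · intro x hx
      show x - b ≠ 0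
      have := hx.1; linarith
  · intro x hx
    rw [interior_Ioo] at hx
    have hx0 : 0 < x := hb0.trans hx.1
    have hd := (hasDerivAt_binKL_right hb0 hb1 hx0 hx.2).div
      ((hasDerivAt_id x).sub_const b) (by have := hx.1; intro h; apply absurd h; show x - b ≠ 0; linarith)
    exact hd.hasDerivWithinAt
  · intro x hx
    rw [interior_Ioo] at hx
    have hx0 : 0 < x := hb0.trans hx.1
    have hxb : 0 < x - b := by linarith [hx.1]
    apply div_nonneg _ (sq_nonneg _)
    have hle := binKL_le_sq hb0 hx.1 hx.2
    have : (x - b) / (x * (1 - x)) * (x - b) = (x - b) ^ 2 / (x * (1 - x)) := by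
      ring
    rw [this]
    linarith

lemma ratio_anti_left {a : ℝ} (ha0 : 0 < a) (ha1 : a < 1) :
    AntitoneOn (fun y => binKL y a / (a - y)) (Set.Ioo 0 a) := by
  apply antitoneOn_of_hasDerivWithinAt_nonpos (convex_Ioo 0 a)
    (f' := fun y => ((Real.log (y / a) - Real.log ((1 - y) / (1 - a))) * (a - y)
      - binKL y a * (-1)) / (a - y) ^ 2)
  · apply ContinuousOn.div
    · exact (continuousOn_binKL_left ha0 ha1).mono Set.Ioo_subset_Ioc_self
    · fun_prop
    · intro y hy
      show a - y ≠ 0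
      have := hy.2; linarith
  · intro y hy
    rw [interior_Ioo] at hy
    have hy1 : y < 1 := hy.2.trans ha1
    have hden : HasDerivAt (fun z : ℝ => a - z) (-1) y := by
      simpa using (hasDerivAt_id y).const_sub a
    have hd := (hasDerivAt_binKL_left ha0 ha1 hy.1 hy1).div hden
      (by have := hy.2; intro h; apply absurd h; show a - y ≠ 0; linarith)
    exact hd.hasDerivWithinAt
  · intro y hy
    rw [interior_Ioo] at hy
    have hy1 : y < 1 := hy.2.trans ha1
    apply div_nonpos_of_nonpos_of_nonneg _ (sq_nonneg _)
    have hG := G_nonpos ha1 hy.1 hy.2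
    nlinarith [hG]

/-- For symmetric noncompliance Π(p), the regret-bound coefficient applied to
μ' = Π(p)·μ is nondecreasing in p on [0, 1/2). -/
theorem coeff_monotone_in_p (μ1 μ2 p q : ℝ)
    (h1 : μ1 ∈ Set.Ioo (0:ℝ) 1) (h2 : μ2 ∈ Set.Ioo (0:ℝ) 1) (hμ : μ2 < μ1)
    (hp : 0 ≤ p) (hpq : p ≤ q) (hq : q < 1/2) :
    f ((1 - p) * μ1 + p * μ2) (p * μ1 + (1 - p) * μ2)
      ≤ f ((1 - q) * μ1 + q * μ2) (q * μ1 + (1 - q) * μ2) := by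
  obtain ⟨hμ1, hμ1'⟩ := h1
  obtain ⟨hμ2, hμ2'⟩ := h2
  set a1 := (1 - p) * μ1 + p * μ2 with ha1def
  set b1 := p * μ1 + (1 - p) * μ2 with hb1def
  set a2 := (1 - q) * μ1 + q * μ2 with ha2def
  set b2 := q * μ1 + (1 - q) * μ2 with hb2def
  have hp2 : p < 1/2 := lt_of_le_of_lt hpq hq
  have hb1pos : 0 < b1 := by nlinarith
  have hb12 : b1 ≤ b2 := by nlinarith
  have hb2a2 : b2 < a2 := by nlinarith
  have ha21 : a2 ≤ a1 := by nlinarith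
  have ha11 : a1 < 1 := by nlinarith
  have ha21' : a2 < 1 := lt_of_le_of_lt ha21 ha11
  have hb2pos : 0 < b2 := lt_of_lt_of_le hb1pos hb12
  have hb1a2 : b1 < a2 := lt_of_le_of_lt hb12 hb2a2
  have hb1a1 : b1 < a1 := lt_of_lt_of_le hb1a2 ha21
  have hb11 : b1 < 1 := hb1a1.trans ha11
  have ha2pos : 0 < a2 := hb1pos.trans hb1a2
  -- Step 1 : f a1 b1 ≤ f a2 b1
  have step1 : f a1 b1 ≤ f a2 b1 := by
    have hmono := ratio_mono_right hb1pos hb11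
      (Set.mem_Ioo.2 ⟨hb1a2, ha21'⟩) (Set.mem_Ioo.2 ⟨hb1a1, ha11⟩) ha21
    have hK1 : 0 < binKL b1 a1 := binKL_pos hb1pos hb1a1 ha11
    have hK2 : 0 < binKL b1 a2 := binKL_pos hb1pos hb1a2 ha21'
    rw [div_le_div_iff₀ (sub_pos.2 hb1a2) (sub_pos.2 hb1a1)] at hmono
    rw [f, f, div_le_div_iff₀ hK1 hK2]
    linear_combination hmono
  -- Step 2 : f a2 b1 ≤ f a2 b2
  have step2 : f a2 b1 ≤ f a2 b2 := by
    have hanti := ratio_anti_left ha2pos ha21'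
      (Set.mem_Ioo.2 ⟨hb1pos, hb1a2⟩) (Set.mem_Ioo.2 ⟨hb2pos, hb2a2⟩) hb12
    have hK1 : 0 < binKL b1 a2 := binKL_pos hb1pos hb1a2 ha21'
    have hK2 : 0 < binKL b2 a2 := binKL_pos hb2pos hb2a2 ha21'
    rw [div_le_div_iff₀ (sub_pos.2 hb2a2) (sub_pos.2 hb1a2)] at hanti
    rw [f, f, div_le_div_iff₀ hK1 hK2]
    linear_combination hanti
  exact step1.trans step2
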